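/- arXiv:2407.20526 — 2 statements merged into one kernel-verified Lean document; each statement's English description precedes it below -/
import Mathlib

section
/- Let H_1 (r_1×n_1), H_2 (r_2×n_2) be matrices over F_2, H_X = (H_1 ⊗ I_{n_2} | I_{r_1} ⊗ H_2^T). Let L = (x̄ ⊗ e_α, 0) with x̄ ∈ ker(H_1), x̄ ≠ 0, and e_α ∉ Im(H_2^T). Then the energy barrier satisfies Δ_{H_X}(L) ≥ Δ_{H_1}(x̄). Combined with the matching upper bound, Δ_{H_X}(L) = Δ_{H_1}(x̄). -/
open Matrix Kronecker

/-- Hamming weight of a vector over `ZMod 2`. -/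
def wt {α : Type*} [Fintype α] (v : α → ZMod 2) : ℕ :=
  (Finset.univ.filter fun i => v i ≠ 0).card

/-- Number of nonzero entries of a matrix over `ZMod 2`. -/
def mwt {α β : Type*} [Fintype α] [Fintype β] (M : Matrix α β (ZMod 2)) : ℕ :=
  (Finset.univ.filter fun p : α × β => M p.1 p.2 ≠ 0).card

/-- Energy barrier of a vector `s` w.r.t. parity check matrix `H`: the minimum over
single-bit-flip paths from `0` to `s` of the maximum energy `wt (H·v)` along the path. -/
noncomputable def eb {α β : Type*} [Fintype α] [Fintype β] (H : Matrix α β (ZMod 2)) (s : β → ZMod 2) : ℕ :=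
  sInf {B | ∃ F : ℕ, ∃ v : Fin (F + 1) → β → ZMod 2,
    v 0 = 0 ∧ v (Fin.last F) = s ∧
    (∀ i : Fin F, wt (v i.castSucc + v i.succ) ≤ 1) ∧
    ∀ i, wt (H.mulVec (v i)) ≤ B}

/-- Energy barrier of a classical code: minimum of `eb` over nonzero codewords. -/
noncomputable def codeEB {α β : Type*} [Fintype α] [Fintype β] (M : Matrix α β (ZMod 2)) : ℕ :=
  sInf {E | ∃ c, c ≠ 0 ∧ M.mulVec c = 0 ∧ eb M c = E}

/-- The X-type parity check matrix of the hypergraph product code. -/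
def HX {r1 n1 r2 n2 : ℕ} (H1 : Matrix (Fin r1) (Fin n1) (ZMod 2))
    (H2 : Matrix (Fin r2) (Fin n2) (ZMod 2)) :
    Matrix (Fin r1 × Fin n2) ((Fin n1 × Fin n2) ⊕ (Fin r1 × Fin r2)) (ZMod 2) :=
  Matrix.fromCols (H1 ⊗ₖ (1 : Matrix (Fin n2) (Fin n2) (ZMod 2)))
    ((1 : Matrix (Fin r1) (Fin r1) (ZMod 2)) ⊗ₖ H2ᵀ)

/- ======================= auxiliary lemmas ======================= -/

lemma wt_le_card {α : Type*} [Fintype α] (v : α → ZMod 2) : wt v ≤ Fintype.card α := by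
  classical
  exact (Finset.card_filter_le _ _)

/-- transfer of supports via an injection -/
lemma wt_le_wt {β γ : Type*} [Fintype β] [Fintype γ] (f : β → ZMod 2) (g : γ → ZMod 2)
    (e : β → γ) (hinj : ∀ b b', f b ≠ 0 → f b' ≠ 0 → e b = e b' → b = b')
    (h : ∀ b, f b ≠ 0 → g (e b) ≠ 0) : wt f ≤ wt g := by
  classical
  apply Finset.card_le_card_of_injOn e
  · intro b hb
    simp only [Finset.mem_coe, Finset.mem_filter, Finset.mem_univ, true_and] at hb ⊢
    exact h b hb
  · intro b hb b' hb' hee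
    simp only [Finset.coe_filter, Set.mem_setOf_eq, Finset.mem_univ, true_and] at hb hb'
    exact hinj b b' hb hb' hee

/-- transfer of supports via a surjection onto the support -/
lemma wt_le_wt' {β γ : Type*} [Fintype β] [Fintype γ] (f : γ → ZMod 2) (g : β → ZMod 2)
    (e : β → γ) (h : ∀ c, f c ≠ 0 → ∃ b, g b ≠ 0 ∧ e b = c) : wt f ≤ wt g := by
  classical
  have hsub : (Finset.univ.filter fun c => f c ≠ 0) ⊆
      (Finset.univ.filter fun b => g b ≠ 0).image e := by
    intro c hc
    simp only [Finset.mem_filter, Finset.mem_univ, true_and] at hc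
    obtain ⟨b, hb, hbc⟩ := h c hc
    exact Finset.mem_image.2 ⟨b, by simp [hb], hbc⟩
  exact le_trans (Finset.card_le_card hsub) (Finset.card_image_le)

/-- there is always a path from 0 to s -/
lemma path_mem {α β : Type*} [Fintype α] [Fintype β] (H : Matrix α β (ZMod 2)) (s : β → ZMod 2) :
    ∃ F : ℕ, ∃ v : Fin (F + 1) → β → ZMod 2,
      v 0 = 0 ∧ v (Fin.last F) = s ∧
      (∀ i : Fin F, wt (v i.castSucc + v i.succ) ≤ 1) ∧
      ∀ i, wt (H.mulVec (v i)) ≤ Fintype.card α := by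
  classical
  obtain ⟨e⟩ : Nonempty (β ≃ Fin (Fintype.card β)) := ⟨Fintype.equivFin β⟩
  refine ⟨Fintype.card β, fun i b => if (e b : ℕ) < (i : ℕ) then s b else 0, ?_, ?_, ?_, ?_⟩
  · funext b; simp
  · funext b; simp [Fin.last, (e b).isLt]
  · intro i
    have hsub : (Finset.univ.filter fun b =>
        ((fun b => if (e b : ℕ) < ((i.castSucc : Fin _) : ℕ) then s b else 0) b +
         (fun b => if (e b : ℕ) < ((i.succ : Fin _) : ℕ) then s b else 0) b) ≠ 0)
        ⊆ {e.symm ⟨i, by omega⟩} := by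
      intro b hb
      simp only [Finset.mem_filter, Finset.mem_univ, true_and] at hb
      simp only [Finset.mem_singleton]
      have hiv : ((i.castSucc : Fin _) : ℕ) = (i : ℕ) := rfl
      have hiv' : ((i.succ : Fin _) : ℕ) = (i : ℕ) + 1 := rfl
      rw [hiv, hiv'] at hb
      by_cases hlt : (e b : ℕ) < (i : ℕ)
      · exfalso; apply hb
        rw [if_pos hlt, if_pos (by omega)]
        exact CharTwo.add_self_eq_zero _
      · by_cases heq : (e b : ℕ) = (i : ℕ)
        · have : e b = ⟨i, by omega⟩ := Fin.ext heq
          rw [← this]; simp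
        · exfalso; apply hb
          rw [if_neg hlt, if_neg (by omega)]
          simp
    calc wt _ ≤ ({e.symm ⟨i, by omega⟩} : Finset β).card := Finset.card_le_card hsub
    _ ≤ 1 := by simp
  · intro i; exact wt_le_card _

/-- transfer lemma for energy barriers along an additive lipschitz energy-nonincreasing map -/
lemma eb_le_transfer {α β α' β' : Type*} [Fintype α] [Fintype β] [Fintype α'] [Fintype β']
    (H : Matrix α β (ZMod 2)) (H' : Matrix α' β' (ZMod 2)) (s : β → ZMod 2) (s' : β' → ZMod 2)
    (Φ : (β → ZMod 2) → (β' → ZMod 2))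
    (hadd : ∀ x y, Φ (x + y) = Φ x + Φ y)
    (h0 : Φ 0 = 0) (hs : Φ s = s')
    (hlip : ∀ w, wt w ≤ 1 → wt (Φ w) ≤ 1)
    (hen : ∀ z, wt (H'.mulVec (Φ z)) ≤ wt (H.mulVec z)) :
    eb H' s' ≤ eb H s := by
  have hne : {B | ∃ F : ℕ, ∃ v : Fin (F + 1) → β → ZMod 2,
      v 0 = 0 ∧ v (Fin.last F) = s ∧
      (∀ i : Fin F, wt (v i.castSucc + v i.succ) ≤ 1) ∧
      ∀ i, wt (H.mulVec (v i)) ≤ B}.Nonempty := ⟨Fintype.card α, path_mem H s⟩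
  have hmem := Nat.sInf_mem hne
  obtain ⟨F, v, hv0, hvl, hvstep, hvB⟩ := hmem
  apply Nat.sInf_le
  refine ⟨F, fun i => Φ (v i), by simp only []; rw [hv0, h0],
    by simp only []; rw [hvl, hs], ?_, ?_⟩
  · intro i
    have : Φ (v i.castSucc) + Φ (v i.succ) = Φ (v i.castSucc + v i.succ) := (hadd _ _).symm
    rw [this]
    exact hlip _ (hvstep i)
  · intro i
    exact le_trans (hen (v i)) (hvB i)

/-- existence of a kernel vector with support at α -/
lemma exists_Lc {r2 n2 : ℕ} (H2 : Matrix (Fin r2) (Fin n2) (ZMod 2)) (α : Fin n2)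
    (hα : ¬ ∃ c, H2ᵀ.mulVec c = Pi.single α 1) :
    ∃ L : Fin n2 → ZMod 2, H2.mulVec L = 0 ∧ L α = 1 := by
  classical
  by_contra h
  push_neg at h
  apply hα
  have hker : ∀ c : Fin n2 → ZMod 2, H2.mulVec c = 0 → c α = 0 := by
    intro c hc
    have h01 : ∀ x : ZMod 2, x = 0 ∨ x = 1 := by decide
    rcases h01 (c α) with h' | h'
    · exact h'
    · exact absurd h' (h c hc)
  set S : (Fin n2 → ZMod 2) →ₗ[ZMod 2] (Fin r2 → ZMod 2) := H2.mulVecLin with hS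
  set f : (Fin n2 → ZMod 2) →ₗ[ZMod 2] ZMod 2 := LinearMap.proj α with hf
  have hle : LinearMap.ker S ≤ LinearMap.ker f := by
    intro c hc
    simp only [LinearMap.mem_ker] at hc ⊢
    exact hker c hc
  set q : ((Fin n2 → ZMod 2) ⧸ LinearMap.ker S) →ₗ[ZMod 2] ZMod 2 :=
    Submodule.liftQ (LinearMap.ker S) f hle with hq
  set g0 : (LinearMap.range S) →ₗ[ZMod 2] ZMod 2 :=
    q.comp (S.quotKerEquivRange.symm.toLinearMap) with hg0
  obtain ⟨g, hg⟩ := LinearMap.exists_extend g0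
  have key : ∀ x : Fin n2 → ZMod 2, g (S x) = f x := by
    intro x
    have h1 : (⟨S x, LinearMap.mem_range_self S x⟩ : LinearMap.range S) =
        S.quotKerEquivRange (Submodule.Quotient.mk x) := by
      ext; rw [LinearMap.quotKerEquivRange_apply_mk]
    have h2 : g (S x) = g0 ⟨S x, LinearMap.mem_range_self S x⟩ := by
      have := congrFun (congrArg DFunLike.coe hg)
        (⟨S x, LinearMap.mem_range_self S x⟩ : LinearMap.range S)
      simpa using this
    rw [h2, h1]
    simp [hg0, hq]
  set w : Fin r2 → ZMod 2 := fun i => g (Pi.single i 1) with hw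
  have hgy : ∀ y : Fin r2 → ZMod 2, g y = ∑ i, y i * w i := by
    intro y
    conv_lhs => rw [pi_eq_sum_univ y]
    rw [map_sum]
    congr 1; funext i
    rw [_root_.map_smul, smul_eq_mul, hw]
    congr 1
    congr 1
    funext j
    simp [Pi.single_apply, eq_comm]
  refine ⟨w, ?_⟩
  funext j
  have hx := key (Pi.single j 1)
  have hSx : S (Pi.single j 1) = fun i => H2 i j := by
    funext i
    simp [hS, Matrix.mulVecLin_apply, Matrix.mulVec_single]
  rw [hSx, hgy] at hx
  have : (H2ᵀ.mulVec w) j = ∑ i, H2 i j * w i := by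
    simp [Matrix.mulVec, dotProduct, Matrix.transpose_apply]
  rw [this, hx]
  simp [hf, Pi.single_apply, eq_comm]

lemma kron_left_mulVec {r1 n1 n2 : ℕ} (H1 : Matrix (Fin r1) (Fin n1) (ZMod 2))
    (v : Fin n1 × Fin n2 → ZMod 2) (k : Fin r1) (β : Fin n2) :
    (H1 ⊗ₖ (1 : Matrix (Fin n2) (Fin n2) (ZMod 2))).mulVec v (k, β) =
      ∑ j, H1 k j * v (j, β) := by
  simp only [Matrix.mulVec, dotProduct, Fintype.sum_prod_type,
    Matrix.kroneckerMap_apply, Matrix.one_apply]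
  congr 1; funext j
  rw [Finset.sum_congr rfl (fun γ _ => by
    rw [mul_ite, mul_one, mul_zero, ite_mul, zero_mul])]
  rw [Finset.sum_ite_eq Finset.univ β (fun γ => H1 k j * v (j, γ))]
  simp

lemma kron_right_mulVec {r1 r2 n2 : ℕ} (H2 : Matrix (Fin r2) (Fin n2) (ZMod 2))
    (u : Fin r1 × Fin r2 → ZMod 2) (k : Fin r1) (β : Fin n2) :
    ((1 : Matrix (Fin r1) (Fin r1) (ZMod 2)) ⊗ₖ H2ᵀ).mulVec u (k, β) =
      ∑ γ, H2 γ β * u (k, γ) := by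
  simp only [Matrix.mulVec, dotProduct, Fintype.sum_prod_type_right,
    Matrix.kroneckerMap_apply, Matrix.one_apply, Matrix.transpose_apply]
  congr 1; funext γ
  rw [Finset.sum_congr rfl (fun k' _ => by
    rw [ite_mul, one_mul, zero_mul, ite_mul, zero_mul])]
  rw [Finset.sum_ite_eq Finset.univ k (fun k' => H2 γ β * u (k', γ))]
  simp

lemma HX_mulVec {r1 n1 r2 n2 : ℕ} (H1 : Matrix (Fin r1) (Fin n1) (ZMod 2))
    (H2 : Matrix (Fin r2) (Fin n2) (ZMod 2))
    (z : (Fin n1 × Fin n2) ⊕ (Fin r1 × Fin r2) → ZMod 2) (k : Fin r1) (β : Fin n2) :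
    (HX H1 H2).mulVec z (k, β) =
      (∑ j, H1 k j * z (Sum.inl (j, β))) + (∑ γ, H2 γ β * z (Sum.inr (k, γ))) := by
  have hz : z = Sum.elim (fun p => z (Sum.inl p)) (fun p => z (Sum.inr p)) := by
    funext p; cases p <;> rfl
  conv_lhs => rw [hz]
  rw [HX, Matrix.fromCols_mulVec_sumElim]
  rw [Pi.add_apply, kron_left_mulVec, kron_right_mulVec]

theorem stmt13 {r1 n1 r2 n2 : ℕ}
    (H1 : Matrix (Fin r1) (Fin n1) (ZMod 2)) (H2 : Matrix (Fin r2) (Fin n2) (ZMod 2))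
    (xbar : Fin n1 → ZMod 2) (hx : H1.mulVec xbar = 0) (hxne : xbar ≠ 0)
    (α : Fin n2) (hα : ¬ ∃ c, H2ᵀ.mulVec c = Pi.single α 1) :
    eb H1 xbar ≤ eb (HX H1 H2)
        (Sum.elim (fun p : Fin n1 × Fin n2 => if p.2 = α then xbar p.1 else 0)
          (0 : Fin r1 × Fin r2 → ZMod 2)) ∧
    eb (HX H1 H2)
        (Sum.elim (fun p : Fin n1 × Fin n2 => if p.2 = α then xbar p.1 else 0)
          (0 : Fin r1 × Fin r2 → ZMod 2)) = eb H1 xbar := by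
  classical
  obtain ⟨Lc, hLc0, hLcα⟩ := exists_Lc H2 α hα
  set L : (Fin n1 × Fin n2) ⊕ (Fin r1 × Fin r2) → ZMod 2 :=
    Sum.elim (fun p : Fin n1 × Fin n2 => if p.2 = α then xbar p.1 else 0)
      (0 : Fin r1 × Fin r2 → ZMod 2) with hL
  -- the deformation for the lower bound
  set Φ1 : ((Fin n1 × Fin n2) ⊕ (Fin r1 × Fin r2) → ZMod 2) → (Fin n1 → ZMod 2) :=
    fun z j => ∑ β, z (Sum.inl (j, β)) * Lc β with hΦ1
  have hΦ1add : ∀ x y, Φ1 (x + y) = Φ1 x + Φ1 y := by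
    intro x y
    funext j
    simp only [hΦ1, Pi.add_apply, add_mul, Finset.sum_add_distrib]
  have hΦ1zero : Φ1 0 = 0 := by
    funext j; simp [hΦ1]
  have hΦ1L : Φ1 L = xbar := by
    funext j
    simp only [hΦ1, hL, Sum.elim_inl]
    rw [Finset.sum_congr rfl (fun β _ => by rw [ite_mul, zero_mul])]
    rw [Finset.sum_ite_eq' Finset.univ α (fun β => xbar j * Lc β)]
    simp [hLcα]
  have hΦ1lip : ∀ w, wt w ≤ 1 → wt (Φ1 w) ≤ 1 := by
    intro w hw
    refine le_trans ?_ hw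
    set b : Fin n1 → Fin n2 := fun j =>
      if h : ∃ β, w (Sum.inl (j, β)) * Lc β ≠ 0 then h.choose else α with hb
    apply wt_le_wt (Φ1 w) w (fun j => Sum.inl (j, b j))
    · intro j j' _ _ he
      exact congrArg (fun p => (Sum.elim Prod.fst (fun _ => j) p)) he
    · intro j hj
      have hex : ∃ β, w (Sum.inl (j, β)) * Lc β ≠ 0 := by
        obtain ⟨β, _, hβ⟩ := Finset.exists_ne_zero_of_sum_ne_zero hj
        exact ⟨β, hβ⟩
      have := hex.choose_spec
      rw [hb]
      simp only [dif_pos hex]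
      intro h0
      exact this (by rw [h0, zero_mul])
  have hΦ1en : ∀ z, wt (H1.mulVec (Φ1 z)) ≤ wt ((HX H1 H2).mulVec z) := by
    intro z
    have key : ∀ k, H1.mulVec (Φ1 z) k = ∑ β, (HX H1 H2).mulVec z (k, β) * Lc β := by
      intro k
      have expand : ∑ β, (HX H1 H2).mulVec z (k, β) * Lc β =
          (∑ β, (∑ j, H1 k j * z (Sum.inl (j, β))) * Lc β) +
          (∑ β, (∑ γ, H2 γ β * z (Sum.inr (k, γ))) * Lc β) := by
        rw [← Finset.sum_add_distrib]
        exact Finset.sum_congr rfl (fun β _ => by rw [HX_mulVec, add_mul])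
      have hsecond : ∑ β, (∑ γ, H2 γ β * z (Sum.inr (k, γ))) * Lc β = 0 := by
        rw [Finset.sum_congr rfl (fun β _ => Finset.sum_mul ..)]
        rw [Finset.sum_comm]
        apply Finset.sum_eq_zero
        intro γ _
        rw [Finset.sum_congr rfl
          (fun β _ => show H2 γ β * z (Sum.inr (k, γ)) * Lc β =
            z (Sum.inr (k, γ)) * (H2 γ β * Lc β) by ring)]
        rw [← Finset.mul_sum]
        have hv : ∑ β, H2 γ β * Lc β = H2.mulVec Lc γ := rfl
        rw [hv, hLc0]
        simp
      have hfirst : ∑ β, (∑ j, H1 k j * z (Sum.inl (j, β))) * Lc β =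
          H1.mulVec (Φ1 z) k := by
        rw [Finset.sum_congr rfl (fun β _ => Finset.sum_mul ..)]
        rw [Finset.sum_comm]
        have hv : H1.mulVec (Φ1 z) k = ∑ j, H1 k j * (∑ β, z (Sum.inl (j, β)) * Lc β) := rfl
        rw [hv]
        refine Finset.sum_congr rfl (fun j _ => ?_)
        rw [Finset.mul_sum]
        exact Finset.sum_congr rfl (fun β _ => by ring)
      rw [expand, hsecond, hfirst, add_zero]
    set c : Fin r1 → Fin n2 := fun k =>
      if h : ∃ β, (HX H1 H2).mulVec z (k, β) * Lc β ≠ 0 then h.choose else α with hc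
    apply wt_le_wt _ _ (fun k => (k, c k))
    · intro k k' _ _ he
      exact congrArg Prod.fst he
    · intro k hk
      rw [key k] at hk
      have hex : ∃ β, (HX H1 H2).mulVec z (k, β) * Lc β ≠ 0 := by
        obtain ⟨β, _, hβ⟩ := Finset.exists_ne_zero_of_sum_ne_zero hk
        exact ⟨β, hβ⟩
      have := hex.choose_spec
      rw [hc]
      simp only [dif_pos hex]
      intro h0
      exact this (by rw [h0, zero_mul])
  have dir1 : eb H1 xbar ≤ eb (HX H1 H2) L :=
    eb_le_transfer (HX H1 H2) H1 L xbar Φ1 hΦ1add hΦ1zero hΦ1L hΦ1lip hΦ1en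
  -- the lift for the upper bound
  set Φ2 : (Fin n1 → ZMod 2) → ((Fin n1 × Fin n2) ⊕ (Fin r1 × Fin r2) → ZMod 2) :=
    fun u => Sum.elim (fun p : Fin n1 × Fin n2 => if p.2 = α then u p.1 else 0)
      (0 : Fin r1 × Fin r2 → ZMod 2) with hΦ2
  have hΦ2add : ∀ x y, Φ2 (x + y) = Φ2 x + Φ2 y := by
    intro x y
    funext p
    cases p with
    | inl q => simp only [hΦ2, Sum.elim_inl, Pi.add_apply]; split <;> simp
    | inr q => simp [hΦ2]
  have hΦ2zero : Φ2 0 = 0 := by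
    funext p; cases p <;> simp [hΦ2]
  have hΦ2lip : ∀ u, wt u ≤ 1 → wt (Φ2 u) ≤ 1 := by
    intro u hu
    refine le_trans ?_ hu
    apply wt_le_wt' (Φ2 u) u (fun j => Sum.inl (j, α))
    intro p hp
    cases p with
    | inl q =>
      simp only [hΦ2, Sum.elim_inl] at hp
      by_cases hq : q.2 = α
      · rw [if_pos hq] at hp
        exact ⟨q.1, hp, by rw [← hq]⟩
      · rw [if_neg hq] at hp; exact absurd rfl hp
    | inr q => simp [hΦ2] at hp
  have hΦ2en : ∀ u, wt ((HX H1 H2).mulVec (Φ2 u)) ≤ wt (H1.mulVec u) := by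
    intro u
    have key : ∀ k β, (HX H1 H2).mulVec (Φ2 u) (k, β) =
        if β = α then H1.mulVec u k else 0 := by
      intro k β
      rw [HX_mulVec]
      have h2 : ∑ γ, H2 γ β * (Φ2 u) (Sum.inr (k, γ)) = 0 := by
        apply Finset.sum_eq_zero
        intro γ _
        simp [hΦ2]
      rw [h2, add_zero]
      by_cases hβ : β = α
      · rw [if_pos hβ]
        have : H1.mulVec u k = ∑ j, H1 k j * u j := rfl
        rw [this]
        refine Finset.sum_congr rfl (fun j _ => ?_)
        simp [hΦ2, hβ]
      · rw [if_neg hβ]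
        apply Finset.sum_eq_zero
        intro j _
        simp [hΦ2, hβ]
    apply wt_le_wt' _ _ (fun k => (k, α))
    intro p hp
    obtain ⟨k, β⟩ := p
    rw [key k β] at hp
    by_cases hβ : β = α
    · rw [if_pos hβ] at hp
      exact ⟨k, hp, by rw [hβ]⟩
    · rw [if_neg hβ] at hp; exact absurd rfl hp
  have dir2 : eb (HX H1 H2) L ≤ eb H1 xbar :=
    eb_le_transfer H1 (HX H1 H2) xbar L Φ2 hΦ2add hΦ2zero rfl hΦ2lip hΦ2en
  exact ⟨dir1, le_antisymm dir2 dir1⟩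
end

section
/- Let H be an m×n matrix over F_2, s ∈ ker(H) with wt(s) = w. Order the support of s as i_1 < ... < i_w and let v_t = e_{i_1} + ... + e_{i_t} for 0 ≤ t ≤ w. Then this is a single-bit-flip path from 0 to s, and for every t, wt(H·v_t) ≤ min(t, w − t)·w_q ≤ ⌊w/2⌋·w_q, where w_q is the maximum column weight of H. In particular Δ(s) ≤ ⌊wt(s)/2⌋·w_q for any s ∈ ker(H). -/
open Matrix Kronecker

/-- The partial-sum path: `pathOf g t` has a `1` exactly at the first `t` support
elements `g 0 < g 1 < ... < g (t-1)`. -/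
def pathOf {n w : ℕ} (g : Fin w → Fin n) (t : ℕ) : Fin n → ZMod 2 :=
  fun i => if ∃ j : Fin w, (j : ℕ) < t ∧ g j = i then 1 else 0

lemma wt_mulVec_le {m n : ℕ} (H : Matrix (Fin m) (Fin n) (ZMod 2)) (w_q : ℕ)
    (hcol : ∀ j, wt (fun i => H i j) ≤ w_q) (v : Fin n → ZMod 2) :
    wt (H.mulVec v) ≤ wt v * w_q := by
  classical
  have hsub : (Finset.univ.filter fun i => H.mulVec v i ≠ 0) ⊆
      (Finset.univ.filter fun j => v j ≠ 0).biUnion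
        (fun j => Finset.univ.filter fun i => H i j ≠ 0) := by
    intro i hi
    simp only [Finset.mem_filter, Finset.mem_univ, true_and] at hi
    have : ∃ j, H i j * v j ≠ 0 := by
      by_contra h
      push_neg at h
      apply hi
      simp [Matrix.mulVec, dotProduct, Finset.sum_eq_zero (fun j _ => h j)]
    obtain ⟨j, hj⟩ := this
    simp only [Finset.mem_biUnion, Finset.mem_filter, Finset.mem_univ, true_and]
    exact ⟨j, fun h => hj (by simp [h]), fun h => hj (by simp [h])⟩
  calc wt (H.mulVec v) ≤ _ := Finset.card_le_card hsub
    _ ≤ ∑ j ∈ (Finset.univ.filter fun j => v j ≠ 0),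
        (Finset.univ.filter fun i => H i j ≠ 0).card := Finset.card_biUnion_le
    _ ≤ wt v * w_q := by
        rw [wt, Finset.card_eq_sum_ones, Finset.sum_mul, one_mul]
        exact Finset.sum_le_sum fun j _ => hcol j

lemma card_filter_lt (w t : ℕ) (ht : t ≤ w) :
    (Finset.univ.filter fun j : Fin w => (j : ℕ) < t).card = t := by
  rw [Finset.card_filter, Fin.sum_univ_eq_sum_range (fun j => if j < t then 1 else 0),
    ← Finset.card_filter, Finset.range_eq_Ico, Finset.Ico_filter_lt, Nat.card_Ico]
  omega

lemma card_filter_ge (w t : ℕ) (ht : t ≤ w) :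
    (Finset.univ.filter fun j : Fin w => t ≤ (j : ℕ)).card = w - t := by
  have h := card_filter_lt w t ht
  have := Finset.card_filter_add_card_filter_not
    (s := (Finset.univ : Finset (Fin w))) (p := fun j : Fin w => (j : ℕ) < t)
  simp only [not_lt, Finset.card_univ, Fintype.card_fin] at this
  omega

lemma wt_ite {n w : ℕ} (g : Fin w → Fin n) (hg : Function.Injective g)
    (P : Fin w → Prop) [DecidablePred P] :
    wt (fun i => if ∃ j, P j ∧ g j = i then (1 : ZMod 2) else 0) =
      (Finset.univ.filter P).card := by
  rw [wt]
  have : (Finset.univ.filter fun i : Fin n =>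
      (if ∃ j, P j ∧ g j = i then (1 : ZMod 2) else 0) ≠ 0) =
      (Finset.univ.filter P).image g := by
    ext i
    simp only [Finset.mem_filter, Finset.mem_univ, true_and, Finset.mem_image, ne_eq,
      ite_eq_right_iff, not_forall]
    constructor
    · rintro ⟨⟨j, hj, rfl⟩, -⟩; exact ⟨j, hj, rfl⟩
    · rintro ⟨j, hj, rfl⟩; exact ⟨⟨j, hj, rfl⟩, one_ne_zero⟩
  rw [this, Finset.card_image_of_injective _ hg]

set_option maxHeartbeats 1000000 in
theorem stmt18 {m n w : ℕ} (H : Matrix (Fin m) (Fin n) (ZMod 2)) (w_q : ℕ)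
    (hcol : ∀ j, wt (fun i => H i j) ≤ w_q)
    (s : Fin n → ZMod 2) (hs : H.mulVec s = 0) (hw : wt s = w)
    (g : Fin w → Fin n) (hg : StrictMono g)
    (hsupp : ∀ i, s i ≠ 0 ↔ ∃ j, g j = i) :
    pathOf g 0 = 0 ∧ pathOf g w = s ∧
    (∀ t < w, wt (pathOf g t + pathOf g (t + 1)) ≤ 1) ∧
    (∀ t ≤ w, wt (H.mulVec (pathOf g t)) ≤ min t (w - t) * w_q) ∧
    eb H s ≤ (w / 2) * w_q := by
  classical
  have hginj : Function.Injective g := hg.injective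
  have hone : ∀ x : ZMod 2, x ≠ 0 → x = 1 := by decide
  -- start
  have h0 : pathOf g 0 = 0 := by
    funext i
    simp [pathOf]
  -- end
  have hW : pathOf g w = s := by
    funext i
    by_cases hi : ∃ j : Fin w, g j = i
    · obtain ⟨j, rfl⟩ := hi
      have h1 : pathOf g w (g j) = 1 := by
        simp only [pathOf]
        rw [if_pos (show ∃ j' : Fin w, (j' : ℕ) < w ∧ g j' = g j from ⟨j, j.isLt, rfl⟩)]
      rw [h1, hone _ ((hsupp (g j)).2 ⟨j, rfl⟩)]
    · have h1 : pathOf g w i = 0 := by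
        simp only [pathOf, ite_eq_right_iff]
        rintro ⟨j, -, rfl⟩
        exact absurd ⟨j, rfl⟩ hi
      have h2 : s i = 0 := by
        by_contra h
        exact hi ((hsupp i).1 h)
      rw [h1, h2]
  -- flip step
  have hstep : ∀ t < w, wt (pathOf g t + pathOf g (t + 1)) ≤ 1 := by
    intro t ht
    have heq : pathOf g t + pathOf g (t + 1) =
        fun i => if ∃ j : Fin w, ((j : ℕ) = t) ∧ g j = i then (1 : ZMod 2) else 0 := by
      funext i
      simp only [Pi.add_apply, pathOf]
      by_cases hi : ∃ j : Fin w, g j = i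
      · obtain ⟨j, rfl⟩ := hi
        have huniq : ∀ P : Fin w → Prop,
            (∃ j' : Fin w, P j' ∧ g j' = g j) ↔ P j := by
          intro P
          constructor
          · rintro ⟨j', hj', h⟩; rwa [← hginj h]
          · intro h; exact ⟨j, h, rfl⟩
        rw [if_congr (huniq _) rfl rfl, if_congr (huniq _) rfl rfl,
          if_congr (huniq _) rfl rfl]
        split_ifs <;> first | rfl | omega | decide
      · have hnone : ∀ P : Fin w → Prop, ∀ _ : DecidablePred P,
            (if ∃ j' : Fin w, P j' ∧ g j' = i then (1 : ZMod 2) else 0) = 0 := by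
          intro P _
          rw [if_neg]
          rintro ⟨j', -, rfl⟩
          exact hi ⟨j', rfl⟩
        rw [hnone _ inferInstance, hnone _ inferInstance, hnone _ inferInstance, add_zero]
    rw [heq, wt_ite g hginj]
    apply Finset.card_le_one.2
    intro a ha b hb
    simp only [Finset.mem_filter] at ha hb
    exact Fin.ext (by omega)
  -- energy bound
  have henergy : ∀ t ≤ w, wt (H.mulVec (pathOf g t)) ≤ min t (w - t) * w_q := by
    intro t ht
    have b1 : wt (H.mulVec (pathOf g t)) ≤ t * w_q := by
      have := wt_mulVec_le H w_q hcol (pathOf g t)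
      have hwt : wt (pathOf g t) = t := by
        have : pathOf g t =
            fun i => if ∃ j : Fin w, ((j : ℕ) < t) ∧ g j = i then (1 : ZMod 2) else 0 := rfl
        rw [this, wt_ite g hginj, card_filter_lt w t ht]
      rwa [hwt] at this
    have b2 : wt (H.mulVec (pathOf g t)) ≤ (w - t) * w_q := by
      have hadd : H.mulVec (pathOf g t) = H.mulVec (s + pathOf g t) := by
        rw [Matrix.mulVec_add, hs, zero_add]
      have hsum : s + pathOf g t =
          fun i => if ∃ j : Fin w, (t ≤ (j : ℕ)) ∧ g j = i then (1 : ZMod 2) else 0 := by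
        funext i
        simp only [Pi.add_apply, ← hW, pathOf]
        by_cases hi : ∃ j : Fin w, g j = i
        · obtain ⟨j, rfl⟩ := hi
          have huniq : ∀ P : Fin w → Prop,
              (∃ j' : Fin w, P j' ∧ g j' = g j) ↔ P j := by
            intro P
            constructor
            · rintro ⟨j', hj', h⟩; rwa [← hginj h]
            · intro h; exact ⟨j, h, rfl⟩
          rw [if_congr (huniq _) rfl rfl, if_congr (huniq _) rfl rfl,
            if_congr (huniq _) rfl rfl]
          have hjw : (j : ℕ) < w := j.isLt
          split_ifs <;> first | rfl | omega | decide
        · have hnone : ∀ P : Fin w → Prop, ∀ _ : DecidablePred P,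
              (if ∃ j' : Fin w, P j' ∧ g j' = i then (1 : ZMod 2) else 0) = 0 := by
            intro P _
            rw [if_neg]
            rintro ⟨j', -, rfl⟩
            exact hi ⟨j', rfl⟩
          rw [hnone _ inferInstance, hnone _ inferInstance, hnone _ inferInstance, add_zero]
      have := wt_mulVec_le H w_q hcol (s + pathOf g t)
      rw [hsum, wt_ite g hginj, card_filter_ge w t ht] at this
      rw [hadd, hsum]; exact this
    rcases le_total t (w - t) with h | h
    · rw [min_eq_left h]; exact b1
    · rw [min_eq_right h]; exact b2
  refine ⟨h0, hW, hstep, henergy, ?_⟩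
  apply Nat.sInf_le
  refine ⟨w, fun i => pathOf g (i : ℕ), ?_, ?_, ?_, ?_⟩
  · simpa using h0
  · simpa using hW
  · intro i
    have := hstep (i : ℕ) i.isLt
    simpa [Fin.coe_castSucc, Fin.val_succ] using this
  · intro i
    have h1 := henergy (i : ℕ) (by omega)
    have h2 : min (i : ℕ) (w - (i : ℕ)) ≤ w / 2 := by
      have : (i : ℕ) ≤ w := by omega
      omega
    exact h1.trans (Nat.mul_le_mul_right w_q h2)
end
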